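/- arXiv:2505.13751 — 4 statements merged into one kernel-verified Lean document; each statement's English description precedes it below -/
import Mathlib

section
/- With unconditional inclusion lists, m·w ≤ m·c_Incl ≤ c_block, B₁ < sum, and Σ_{j=1}^m B^j < m·f_CM, there is no Nash equilibrium in which t₀ is excluded from the block. Proof structure: since B₁ < sum, at equilibrium the block producer includes all inclusion-list transactions; since t₀ is not in the block, no includer listed t₀; since the sum of bribes is less than m·f_CM, some includer j has B^j < f_CM and would strictly gain f_CM − B^j > 0 by listing t₀ — contradiction. -/
/-- Unconditional lists, m·w ≤ m·c_Incl ≤ c_block, B₁ < sum and Σ B^j < m·f_CM: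
there is no Nash equilibrium in which t₀ is excluded from the block. -/
theorem stmt8 (m w cIncl cblock : ℕ) (hm : 1 ≤ m)
    (hcap1 : m * w ≤ m * cIncl) (hcap2 : m * cIncl ≤ cblock)
    (sum fCM B1 : ℝ) (B : Fin m → ℝ)
    (hsum : 0 < sum) (hfCM : 0 < fCM) (hBnn : ∀ j, 0 ≤ B j)
    (hB1 : B1 < sum) (hSB : ∑ j, B j < (m : ℝ) * fCM) :
    let uCM : (Fin m → Bool) → Bool → Fin m → ℝ := fun σ bp j =>
      if σ j then (if bp = true ∧ ∀ i, σ i = true → j ≤ i then fCM else 0) else B j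
    let uBP : (Fin m → Bool) → Bool → ℝ := fun σ bp =>
      if bp then sum + (if ∀ j, σ j = false then B1 else 0) else B1
    ∀ (σ : Fin m → Bool) (bp : Bool),
      ((∀ j b, uCM (Function.update σ j b) bp j ≤ uCM σ bp j) ∧
          (∀ b, uBP σ b ≤ uBP σ bp)) →
        bp = true ∧ ∃ j, σ j = true := by
  intro uCM uBP σ bp h
  obtain ⟨hC, hP⟩ := h
  -- Step 1: bp = true
  have hbp : bp = true := by
    by_contra hb
    have hb' : bp = false := by cases bp <;> simp_all
    have h1 := hP true
    rw [hb'] at h1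
    simp only [uBP, if_true, Bool.false_eq_true, if_false] at h1
    split at h1 <;> linarith
  subst hbp
  refine ⟨rfl, ?_⟩
  by_contra hno
  push_neg at hno
  have hall : ∀ j, σ j = false := by
    intro j; cases hj : σ j
    · rfl
    · exact absurd hj (hno j)
  -- exists j with B j < fCM
  have hex : ∃ j, B j < fCM := by
    by_contra hc
    push_neg at hc
    have : (m : ℝ) * fCM ≤ ∑ j, B j := by
      calc (m : ℝ) * fCM = ∑ _j : Fin m, fCM := by
            simp [Finset.sum_const, Finset.card_univ]
        _ ≤ ∑ j, B j := Finset.sum_le_sum fun j _ => hc j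
    linarith
  obtain ⟨j, hj⟩ := hex
  have h3 := hC j true
  have hupd : Function.update σ j true j = true := by simp
  simp only [uCM, hupd, if_true, hall j, Bool.false_eq_true, if_false] at h3
  have hcond : (True ∧ ∀ i, Function.update σ j true i = true → j ≤ i) := by
    refine ⟨trivial, fun i hi => ?_⟩
    by_cases hij : i = j
    · exact le_of_eq hij.symm
    · rw [Function.update_of_ne hij] at hi
      exact absurd hi (by simp [hall i])
  rw [if_pos hcond] at h3
  linarith
end

section
/- In the Double TFM with burning fee r > 0 and block producer cost μ_BP ≥ 0 per unit of size, assume users cannot overbid (c_t ≤ v_t) and the block producer includes a transaction iff δ^BP_t ≥ μ_BP and c_t ≥ r + μ_BP. Then the bid b_t = (0, μ_BP, min{v_t, r + μ_BP}) is utility-maximizing for the user among all bids with c_t ≤ v_t: if v_t ≥ r + μ_BP the bid yields utility (v_t − r − μ_BP)·s ≥ 0 and no bid with smaller total fee achieves inclusion; if v_t < r + μ_BP no feasible bid yields positive utility. -/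
/-- Double TFM "usually DSIC": with no overbidding (c ≤ v) and inclusion iff
δ^BP ≥ μ and c ≥ r + μ, the bid (δ^CM, δ^BP, c) = (0, μ, min{v, r+μ}) maximizes the
user's utility; when v ≥ r + μ it yields utility (v − r − μ)·s ≥ 0. -/
theorem stmt10 (r μ s v : ℝ) (hr : 0 < r) (hμ : 0 ≤ μ) (hs : 0 < s) :
    let fee : ℝ → ℝ → ℝ → ℝ := fun δCM δBP c =>
      max (min δBP (c - r)) 0 + max (min δCM (c - r - max (min δBP (c - r)) 0)) 0
    let u : ℝ → ℝ → ℝ → ℝ := fun δCM δBP c =>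
      if μ ≤ δBP ∧ r + μ ≤ c then (v - r - fee δCM δBP c) * s else 0
    (r + μ ≤ v → u 0 μ (min v (r + μ)) = (v - r - μ) * s ∧ 0 ≤ (v - r - μ) * s) ∧
      ∀ δCM δBP c, 0 ≤ δCM → 0 ≤ δBP → c ≤ v →
        u δCM δBP c ≤ u 0 μ (min v (r + μ)) := by
  intro fee u
  have hfee0 : ∀ δBP c, fee 0 δBP c = max (min δBP (c - r)) 0 := by
    intro δBP c
    simp only [fee]
    have : min (0:ℝ) (c - r - max (min δBP (c - r)) 0) ≤ 0 := min_le_left _ _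
    rw [max_eq_right this, add_zero]
  have htarget : r + μ ≤ v → u 0 μ (min v (r + μ)) = (v - r - μ) * s := by
    intro hv
    have hmin : min v (r + μ) = r + μ := min_eq_right hv
    simp only [u, hmin, hfee0]
    rw [if_pos ⟨le_refl μ, le_refl _⟩]
    have : min μ (r + μ - r) = μ := by rw [show r + μ - r = μ by ring, min_self]
    rw [this, max_eq_left hμ]
  constructor
  · intro hv
    refine ⟨htarget hv, mul_nonneg (by linarith) hs.le⟩
  · intro δCM δBP c hCM hBP hcv
    by_cases hv : r + μ ≤ v
    · rw [htarget hv]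
      simp only [u]
      split_ifs with h
      · obtain ⟨h1, h2⟩ := h
        have hfge : μ ≤ fee δCM δBP c := by
          have h3 : μ ≤ min δBP (c - r) := le_min h1 (by linarith)
          have h4 : μ ≤ max (min δBP (c - r)) 0 := h3.trans (le_max_left _ _)
          have h5 : (0:ℝ) ≤ max (min δCM (c - r - max (min δBP (c - r)) 0)) 0 :=
            le_max_right _ _
          simp only [fee]; linarith
        have : v - r - fee δCM δBP c ≤ v - r - μ := by linarith
        exact mul_le_mul_of_nonneg_right this hs.le
      · exact mul_nonneg (by linarith) hs.le
    · push_neg at hv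
      have hmin : min v (r + μ) = v := min_eq_left hv.le
      simp only [u, hmin]
      rw [if_neg (by intro h; linarith [h.2]), if_neg (by intro h; linarith [h.2])]
end

section
/- In the Single TFM, under the same assumptions (no overbidding, inclusion iff c_t ≥ r + μ_BP), the bid c_t = min{v_t, r + μ_BP} is a dominant strategy for the user: it achieves utility max{v_t − r − μ_BP, 0}·s, and no alternative bid c'_t ≤ v_t achieves strictly higher utility. -/
/-- Single TFM "usually DSIC": with no overbidding and inclusion iff c ≥ r + μ,
bidding c = min{v, r+μ} yields utility max{v − r − μ, 0}·s and no bid c' ≤ v does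
strictly better. -/
theorem stmt11 (r μ s v : ℝ) (hr : 0 < r) (hμ : 0 ≤ μ) (hs : 0 < s) :
    let u : ℝ → ℝ := fun c => if r + μ ≤ c then (v - c) * s else 0
    u (min v (r + μ)) = max (v - r - μ) 0 * s ∧
      ∀ c : ℝ, c ≤ v → u c ≤ u (min v (r + μ)) := by
  intro u
  have key : u (min v (r + μ)) = max (v - r - μ) 0 * s := by
    rcases le_total v (r + μ) with h | h
    · rcases eq_or_lt_of_le h with he | hlt
      · simp [u, min_eq_left h, ← he, sub_sub]
      · have : min v (r + μ) = v := min_eq_left h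
        rw [this]
        simp only [u]
        rw [if_neg (not_le.mpr hlt)]
        have : max (v - r - μ) 0 = 0 := max_eq_right (by linarith)
        rw [this, zero_mul]
    · have : min v (r + μ) = r + μ := min_eq_right h
      rw [this]
      simp only [u]
      rw [if_pos le_rfl]
      have hm : max (v - r - μ) 0 = v - r - μ := max_eq_left (by linarith)
      rw [hm]; ring
  refine ⟨key, fun c hc => ?_⟩
  rw [key]
  simp only [u]
  by_cases hcase : r + μ ≤ c
  · rw [if_pos hcase]
    have h1 : v - c ≤ max (v - r - μ) 0 := le_max_of_le_left (by linarith)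
    exact mul_le_mul_of_nonneg_right h1 hs.le
  · rw [if_neg hcase]
    exact mul_nonneg (le_max_right _ _) hs.le
end

section
/- Sequential greedy partition optimality: let transactions have distinct committee fees and fix capacity c per includer and m includers. Define the indicated assignment: includer 1 takes the c highest-fee transactions, includer 2 the next c, etc. Then for includer j, given includers 1,…,j−1 follow the rule, any transaction already taken by an includer with smaller order yields includer j fee 0 (payment goes to the smallest-order lister), while any transaction not assigned to includers 1,…,j has committee fee at most that of every transaction in includer j's assigned set. Hence includer j's assigned set maximizes their total committee fee among all size-≤c subsets of the mempool given the others' lists. -/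
lemma aux18 (f : ℕ → ℝ) (hf : Antitone f) (hf0 : ∀ i, 0 ≤ f i) :
    ∀ (c a : ℕ) (S : Finset ℕ), S.card ≤ c → (∀ x ∈ S, a ≤ x) →
      ∑ t ∈ S, f t ≤ ∑ t ∈ Finset.Ico a (a + c), f t := by
  intro c
  induction c with
  | zero =>
    intro a S hcard _
    simp [Finset.card_eq_zero.mp (Nat.le_zero.mp hcard)]
  | succ c ih =>
    intro a S hcard hge
    rcases S.eq_empty_or_nonempty with rfl | hne
    · simpa using Finset.sum_nonneg (fun i _ => hf0 i)
    · set x := S.min' hne with hx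
      have hxS : x ∈ S := S.min'_mem hne
      have hax : a ≤ x := hge x hxS
      have hsum : ∑ t ∈ S, f t = f x + ∑ t ∈ S.erase x, f t :=
        (Finset.add_sum_erase S f hxS).symm
      have hcard' : (S.erase x).card ≤ c := by
        have := Finset.card_erase_of_mem hxS
        omega
      have hge' : ∀ y ∈ S.erase x, a + 1 ≤ y := by
        intro y hy
        have hyS := Finset.mem_of_mem_erase hy
        have hyx : y ≠ x := Finset.ne_of_mem_erase hy
        have := S.min'_le y hyS
        omega
      have hIH := ih (a + 1) (S.erase x) hcard' hge'
      have hsplit : ∑ t ∈ Finset.Ico a (a + (c + 1)), f t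
          = f a + ∑ t ∈ Finset.Ico (a + 1) (a + 1 + c), f t := by
        have h1 : Finset.Ico a (a + (c + 1)) = insert a (Finset.Ico (a + 1) (a + 1 + c)) := by
          ext y
          simp only [Finset.mem_Ico, Finset.mem_insert]
          omega
        rw [h1, Finset.sum_insert (by simp)]
      rw [hsum, hsplit]
      exact add_le_add (hf hax) hIH

/-- Sequential greedy partition optimality for includers: with transactions sorted by
strictly decreasing committee fee, includer j's assigned block of positions
(j−1)·c … j·c−1 maximizes their payoff (the sum of fees of listed transactions not
listed by any smaller-order includer) among all size-≤ c subsets of the mempool. -/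
theorem stmt18 (m c n j : ℕ) (hj1 : 1 ≤ j) (hjm : j ≤ m) (hn : j * c ≤ n)
    (f : ℕ → ℝ) (hf : StrictAnti f) (hf0 : ∀ i, 0 ≤ f i) :
    let taken : Finset ℕ := Finset.range ((j - 1) * c)
    let Aj : Finset ℕ := Finset.Ico ((j - 1) * c) (j * c)
    let payoff : Finset ℕ → ℝ := fun S => ∑ t ∈ S \ taken, f t
    ∀ S ⊆ Finset.range n, S.card ≤ c → payoff S ≤ payoff Aj := by
  intro taken Aj payoff S _hSn hScard
  have hjc : (j - 1) * c + c = j * c := by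
    have : (j - 1) + 1 = j := Nat.sub_add_cancel hj1
    calc (j - 1) * c + c = ((j - 1) + 1) * c := by ring
      _ = j * c := by rw [this]
  have hAjdiff : Aj \ taken = Aj := by
    apply Finset.sdiff_eq_self_of_disjoint
    rw [Finset.disjoint_left]
    intro x hx hx'
    simp only [Aj, taken, Finset.mem_Ico, Finset.mem_range] at hx hx'
    omega
  have h1 : payoff S = ∑ t ∈ S \ taken, f t := rfl
  have h2 : payoff Aj = ∑ t ∈ Finset.Ico ((j-1)*c) ((j-1)*c + c), f t := by
    simp only [payoff, hAjdiff, Aj, hjc]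
  rw [h1, h2]
  apply aux18 f hf.antitone hf0 c ((j-1)*c)
  · exact le_trans (Finset.card_le_card (Finset.sdiff_subset)) hScard
  · intro x hx
    simp only [taken, Finset.mem_sdiff, Finset.mem_range] at hx
    omega
end
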